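/- Let n ≥ 3, let σ₁,…,σₙ ∈ {+1,−1}, and define f(x₁,…,x_{n−1}) := Σ_{i=1}^{n−1} σᵢ√|xᵢ| + σₙ√|Σ_{i=1}^{n−1} σᵢxᵢ|. Let j₁,…,j_{n−1} be nonzero real numbers with s := Σ_{i=1}^{n−1} σᵢjᵢ ≠ 0, and set jₙ := −σₙ·s (so that Σ_{i=1}^{n} σᵢjᵢ = 0). Then the function x₁ ↦ f(x₁, j₂,…,j_{n−1}) is differentiable at j₁ with derivative equal to σ₁·sgn(j₁)/(2√|j₁|) + σ₁σₙ·sgn(s)/(2√|s|), and this derivative vanishes if and only if j₁ = jₙ. -/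

import Mathlib

noncomputable def gg (a : ℝ) : ℝ := Real.sign a / (2 * Real.sqrt |a|)

lemma gg_pos {a : ℝ} (h : 0 < a) : 0 < gg a := by
  rw [gg, Real.sign_of_pos h]
  positivity

lemma gg_neg' {a : ℝ} (h : a < 0) : gg a < 0 := by
  rw [gg, Real.sign_of_neg h]
  have : 0 < Real.sqrt |a| := Real.sqrt_pos.mpr (abs_pos.mpr h.ne)
  exact div_neg_of_neg_of_pos (by norm_num) (by linarith)

lemma gg_inj {a b : ℝ} (ha : a ≠ 0) (hb : b ≠ 0) (h : gg a = gg b) : a = b := by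
  rcases ha.lt_or_gt with h1 | h1 <;> rcases hb.lt_or_gt with h2 | h2
  · have sa : 0 < Real.sqrt |a| := Real.sqrt_pos.mpr (abs_pos.mpr ha)
    have sb : 0 < Real.sqrt |b| := Real.sqrt_pos.mpr (abs_pos.mpr hb)
    rw [gg, gg, Real.sign_of_neg h1, Real.sign_of_neg h2,
      div_eq_div_iff (by linarith) (by linarith)] at h
    have : Real.sqrt |a| = Real.sqrt |b| := by linarith
    have := (Real.sqrt_inj (abs_nonneg a) (abs_nonneg b)).mp this
    rw [abs_of_neg h1, abs_of_neg h2] at this; linarith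
  · exact absurd (h ▸ gg_neg' h1) (not_lt.mpr (gg_pos h2).le)
  · exact absurd (h ▸ gg_pos h1) (not_lt.mpr (gg_neg' h2).le)
  · have sa : 0 < Real.sqrt |a| := Real.sqrt_pos.mpr (abs_pos.mpr ha)
    have sb : 0 < Real.sqrt |b| := Real.sqrt_pos.mpr (abs_pos.mpr hb)
    rw [gg, gg, Real.sign_of_pos h1, Real.sign_of_pos h2,
      div_eq_div_iff (by linarith) (by linarith)] at h
    have : Real.sqrt |a| = Real.sqrt |b| := by linarith
    have := (Real.sqrt_inj (abs_nonneg a) (abs_nonneg b)).mp this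
    rw [abs_of_pos h1, abs_of_pos h2] at this; linarith

lemma gg_neg_arg (a : ℝ) : gg (-a) = -gg a := by
  simp [gg, Real.sign_neg, neg_div]

lemma hasDerivAt_sqrt_abs (a : ℝ) (ha : a ≠ 0) :
    HasDerivAt (fun t => Real.sqrt |t|) (gg a) a := by
  rcases ha.lt_or_gt with h | h
  · have hev : ∀ᶠ t in nhds a, Real.sqrt (-t) = Real.sqrt |t| := by
      filter_upwards [eventually_lt_nhds h] with t ht
      rw [abs_of_neg ht]
    have hd : HasDerivAt (fun t : ℝ => Real.sqrt (-t)) (1 / (2 * Real.sqrt (-a)) * (-1)) a :=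
      (Real.hasDerivAt_sqrt (neg_ne_zero.mpr ha)).comp a (hasDerivAt_neg a)
    have := hd.congr_of_eventuallyEq (hev.mono fun t ht => ht.symm)
    refine this.congr_deriv ?_
    rw [gg, Real.sign_of_neg h, abs_of_neg h]
    ring
  · have hev : ∀ᶠ t in nhds a, Real.sqrt t = Real.sqrt |t| := by
      filter_upwards [eventually_gt_nhds h] with t ht
      rw [abs_of_pos ht]
    have hd := Real.hasDerivAt_sqrt ha
    have := hd.congr_of_eventuallyEq (hev.mono fun t ht => ht.symm)
    refine this.congr_deriv ?_
    rw [gg, Real.sign_of_pos h, abs_of_pos h]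

/-- Key computation in the proof of the resonance proposition (Section 4.1).
Here `n = m + 3 ≥ 3`, the signs are `σ₁,…,σₙ = σ 0, …, σ (Fin.last _)`, the
first `n - 1 = m + 2` of them are indexed through `Fin.castSucc`, and
`x₁ ↦ f(x₁, j₂, …, j_{n-1})` is the function `t ↦ f (Function.update j 0 t)`.
Its derivative at `j₁ = j 0` is
`σ₁ sgn(j₁)/(2√|j₁|) + σ₁σₙ sgn(s)/(2√|s|)`, and it vanishes iff
`j₁ = jₙ = -σₙ s`. -/
theorem resonance_partial_derivative
    (m : ℕ)
    (σ : Fin (m + 3) → ℝ) (hσ : ∀ i, σ i = 1 ∨ σ i = -1)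
    (j : Fin (m + 2) → ℝ) (hj : ∀ i, j i ≠ 0)
    (s : ℝ) (hs : s = ∑ i : Fin (m + 2), σ i.castSucc * j i) (hs0 : s ≠ 0)
    (jn : ℝ) (hjn : jn = -σ (Fin.last (m + 2)) * s)
    (f : (Fin (m + 2) → ℝ) → ℝ)
    (hf : ∀ x : Fin (m + 2) → ℝ,
      f x = (∑ i : Fin (m + 2), σ i.castSucc * Real.sqrt |x i|)
        + σ (Fin.last (m + 2)) * Real.sqrt |∑ i : Fin (m + 2), σ i.castSucc * x i|)
    (D : ℝ)
    (hD : D = σ ((0 : Fin (m + 2)).castSucc) * Real.sign (j 0) / (2 * Real.sqrt |j 0|)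
        + σ ((0 : Fin (m + 2)).castSucc) * σ (Fin.last (m + 2)) * Real.sign s
            / (2 * Real.sqrt |s|)) :
    HasDerivAt (fun t : ℝ => f (Function.update j 0 t)) D (j 0)
      ∧ (D = 0 ↔ j 0 = jn) := by
  set σ0 : ℝ := σ ((0 : Fin (m + 2)).castSucc) with hσ0
  set σn : ℝ := σ (Fin.last (m + 2)) with hσn
  set C : ℝ := ∑ i ∈ ({0}ᶜ : Finset (Fin (m + 2))), σ i.castSucc * Real.sqrt |j i| with hC
  set r : ℝ := ∑ i ∈ ({0}ᶜ : Finset (Fin (m + 2))), σ i.castSucc * j i with hr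
  have hj0 : j 0 ≠ 0 := hj 0
  -- s = σ0 * j 0 + r
  have hsr : s = σ0 * j 0 + r := by
    rw [hs, Fintype.sum_eq_add_sum_compl 0 (fun i => σ i.castSucc * j i)]
  -- rewrite the one-variable function
  have key : ∀ t : ℝ, f (Function.update j 0 t)
      = σ0 * Real.sqrt |t| + C + σn * Real.sqrt |σ0 * t + r| := by
    intro t
    rw [hf]
    have e1 : ∑ i : Fin (m + 2), σ i.castSucc * Real.sqrt |Function.update j 0 t i|
        = σ0 * Real.sqrt |t| + C := by
      rw [Fintype.sum_eq_add_sum_compl 0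
        (fun i => σ i.castSucc * Real.sqrt |Function.update j 0 t i|)]
      simp only [Function.update_self]
      congr 1
      refine Finset.sum_congr rfl fun i hi => ?_
      rw [Function.update_of_ne (Finset.mem_compl.mp hi ∘ Finset.mem_singleton.mpr)]
    have e2 : ∑ i : Fin (m + 2), σ i.castSucc * Function.update j 0 t i = σ0 * t + r := by
      rw [Fintype.sum_eq_add_sum_compl 0 (fun i => σ i.castSucc * Function.update j 0 t i)]
      simp only [Function.update_self]
      congr 1
      refine Finset.sum_congr rfl fun i hi => ?_
      rw [Function.update_of_ne (Finset.mem_compl.mp hi ∘ Finset.mem_singleton.mpr)]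
    rw [e1, e2]
  have feq : (fun t : ℝ => f (Function.update j 0 t))
      = fun t : ℝ => σ0 * Real.sqrt |t| + C + σn * Real.sqrt |σ0 * t + r| := funext key
  -- derivative computation
  have h1 : HasDerivAt (fun t : ℝ => σ0 * Real.sqrt |t| + C) (σ0 * gg (j 0)) (j 0) :=
    ((hasDerivAt_sqrt_abs (j 0) hj0).const_mul σ0).add_const C
  have hinner : HasDerivAt (fun t : ℝ => σ0 * t + r) σ0 (j 0) := by
    simpa using ((hasDerivAt_id (j 0)).const_mul σ0).add_const r
  have houter : HasDerivAt (fun x : ℝ => Real.sqrt |x|) (gg s) (σ0 * j 0 + r) := by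
    rw [← hsr]; exact hasDerivAt_sqrt_abs s hs0
  have h2 : HasDerivAt (fun t : ℝ => σn * Real.sqrt |σ0 * t + r|) (σn * (gg s * σ0)) (j 0) :=
    by have := (houter.comp (j 0) hinner).const_mul σn; exact this
  have hDval : D = σ0 * gg (j 0) + σn * (gg s * σ0) := by
    rw [hD, gg, gg]; ring
  have hderiv : HasDerivAt (fun t : ℝ => f (Function.update j 0 t)) D (j 0) := by
    rw [feq, hDval]
    exact h1.add h2
  refine ⟨hderiv, ?_⟩
  -- the iff
  have hσ0' : σ0 = 1 ∨ σ0 = -1 := hσ _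
  have hσn' : σn = 1 ∨ σn = -1 := hσ _
  have hσ0ne : σ0 ≠ 0 := by rcases hσ0' with h | h <;> rw [h] <;> norm_num
  have hjn0 : jn ≠ 0 := by
    rw [hjn]
    rcases hσn' with h | h <;> rw [h] <;> simpa using hs0
  have ggjn : gg jn = -(σn * gg s) := by
    rcases hσn' with h | h
    · rw [hjn, h]
      simpa using gg_neg_arg s
    · rw [hjn, h]
      simp
  constructor
  · intro hD0
    have : σ0 * (gg (j 0) + σn * gg s) = 0 := by
      rw [← hD0, hDval]; ring
    have h0 : gg (j 0) + σn * gg s = 0 := by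
      rcases mul_eq_zero.mp this with h | h
      · exact absurd h hσ0ne
      · exact h
    have : gg (j 0) = gg jn := by rw [ggjn]; linarith
    exact gg_inj hj0 hjn0 this
  · intro hjeq
    rw [hDval, hjeq, ggjn]; ring
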